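/- Let D be a finite set, d ≥ 1, g_i ∈ ℝ^d for i ∈ D, α > 0, and define F_S, Δ_x(S), base_x, ε_x(S) as for the Fisher utility. Suppose there exist G_max > 0 and ρ ∈ (0,1) with ‖g_x‖ ≤ G_max for all x, with α‖F_S‖ ≤ ρ for every S ⊆ D of size at most k, and with 1 − ρ − α G_max² ρ > 0; set C = 1/(1 − ρ − α G_max² ρ). Then for any nested chain S_0 = ∅ ⊂ S_1 ⊂ ⋯ ⊂ S_k with S_t = S_{t−1} ∪ {x_t}, the cumulative perturbation satisfies ∑_{t=1}^{k} |ε_{x_t}(S_{t−1})| ≤ C · k · α² · max_{S ⊆ D, |S| ≤ k} max_{x ∈ D} ∑_{y∈S} (g_xᵀ g_y)². -/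

import Mathlib

open Matrix Finset

/-- Fisher matrix `F_S = ∑_{y∈S} g_y g_yᵀ`. -/
noncomputable def fisherMatrix {ι : Type*} [DecidableEq ι] {d : ℕ}
    (g : ι → (Fin d → ℝ)) (S : Finset ι) : Matrix (Fin d) (Fin d) ℝ :=
  ∑ y ∈ S, vecMulVec (g y) (g y)

/-- Fisher utility `F(S) = log det (I + α F_S)`. -/
noncomputable def fisherUtility {ι : Type*} [DecidableEq ι] {d : ℕ}
    (g : ι → (Fin d → ℝ)) (α : ℝ) (S : Finset ι) : ℝ :=
  Real.log ((1 + α • fisherMatrix g S).det)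

/-- Marginal gain `Δ_x(S) = F(S ∪ {x}) − F(S)`. -/
noncomputable def fisherDelta {ι : Type*} [DecidableEq ι] {d : ℕ}
    (g : ι → (Fin d → ℝ)) (α : ℝ) (x : ι) (S : Finset ι) : ℝ :=
  fisherUtility g α (insert x S) - fisherUtility g α S

/-- Modular baseline `base_x = log (1 + α ‖gₓ‖²)`. -/
noncomputable def fisherBase {ι : Type*} {d : ℕ}
    (g : ι → (Fin d → ℝ)) (α : ℝ) (x : ι) : ℝ :=
  Real.log (1 + α * (g x ⬝ᵥ g x))

/-- Perturbation `ε_x(S) = Δ_x(S) − base_x`. -/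
noncomputable def fisherEps {ι : Type*} [DecidableEq ι] {d : ℕ}
    (g : ι → (Fin d → ℝ)) (α : ℝ) (x : ι) (S : Finset ι) : ℝ :=
  fisherDelta g α x S - fisherBase g α x

/-- Operator (spectral) norm of a matrix, as the norm of the induced map on
Euclidean space. -/
noncomputable def matOpNorm {d : ℕ} (A : Matrix (Fin d) (Fin d) ℝ) : ℝ :=
  ‖Matrix.toEuclideanCLM (𝕜 := ℝ) A‖


lemma psd_smul {n : Type*} [Fintype n] [DecidableEq n] {F : Matrix n n ℝ}
    (hF : F.PosSemidef) {α : ℝ} (hα : 0 ≤ α) : (α • F).PosSemidef := by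
  refine PosSemidef.of_dotProduct_mulVec_nonneg ?_ fun x => ?_
  · simpa [IsHermitian, conjTranspose_smul] using congrArg (α • ·) hF.1.eq
  · have := hF.dotProduct_mulVec_nonneg x
    simp only [smul_mulVec, dotProduct_smul, smul_eq_mul]
    positivity

lemma psd_vecMulVec {n : Type*} [Fintype n] (v : n → ℝ) : (vecMulVec v v).PosSemidef := by
  refine PosSemidef.of_dotProduct_mulVec_nonneg ?_ fun x => ?_
  · ext i j; simp [vecMulVec_apply, conjTranspose_apply, mul_comm]
  · have : vecMulVec v v *ᵥ x = (v ⬝ᵥ x) • v := by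
      ext i
      simp only [vecMulVec_apply, mulVec, dotProduct, Pi.smul_apply, smul_eq_mul,
        Finset.sum_mul, Finset.mul_sum]
      exact Finset.sum_congr rfl fun j _ => by ring
    rw [this]
    simp only [dotProduct_smul, smul_eq_mul, star_trivial]
    rw [dotProduct_comm x v]
    exact mul_self_nonneg _

lemma key_step {n : Type*} [Fintype n] [DecidableEq n] {F : Matrix n n ℝ}
    (hF : F.PosSemidef) {α : ℝ} (hα : 0 < α) (v : n → ℝ) :
    |Real.log (1 + α • (F + vecMulVec v v)).det - Real.log (1 + α • F).det
      - Real.log (1 + α * (v ⬝ᵥ v))| ≤ α ^ 2 * (v ⬝ᵥ F *ᵥ v) := by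
  set M : Matrix n n ℝ := 1 + α • F with hM
  have hαF : (α • F).PosSemidef := psd_smul hF hα.le
  have hMpd : M.PosDef := Matrix.PosDef.add_posSemidef Matrix.PosDef.one hαF
  have hdet : 0 < M.det := hMpd.det_pos
  have hdetu : IsUnit M.det := isUnit_iff_ne_zero.mpr (ne_of_gt hdet)
  have hMinv : M⁻¹.PosDef := hMpd.inv
  have hMM : M * M⁻¹ = 1 := mul_nonsing_inv M hdetu
  have hMM' : M⁻¹ * M = 1 := nonsing_inv_mul M hdetu
  -- quadratic form notation
  set q : ℝ := v ⬝ᵥ M⁻¹ *ᵥ v with hq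
  set p : ℝ := v ⬝ᵥ v with hp
  have hq0 : 0 ≤ q := by simpa using hMinv.posSemidef.dotProduct_mulVec_nonneg v
  -- determinant lemma
  have hdetform : (1 + α • (F + vecMulVec v v)).det = M.det * (1 + α * q) := by
    have h1 : (1 : Matrix n n ℝ) + α • (F + vecMulVec v v)
        = M + replicateCol Unit (α • v) * replicateRow Unit v := by
      rw [← vecMulVec_eq Unit]
      have : vecMulVec (α • v) v = α • vecMulVec v v := by
        ext i j; simp [vecMulVec_apply, mul_assoc]
      rw [this, hM]
      rw [smul_add]
      abel
    rw [h1, det_add_replicateCol_mul_replicateRow hdetu]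
    congr 1
    rw [det_unique]
    have h2 : (replicateRow Unit v * M⁻¹ * replicateCol Unit (α • v)) default default
        = α * (v ⬝ᵥ (M⁻¹ *ᵥ v)) := by
      simp only [Matrix.mul_apply, replicateRow, replicateCol, dotProduct, mulVec, of_apply, Pi.smul_apply,
        smul_eq_mul, Finset.mul_sum, Finset.sum_mul, Finset.univ_unique, Finset.sum_singleton]
      rw [Finset.sum_comm]
      exact Finset.sum_congr rfl fun _ _ => Finset.sum_congr rfl fun _ _ => by ring
    rw [Matrix.add_apply, Matrix.one_apply_eq, h2]
  have hp0 : 0 ≤ p := Finset.sum_nonneg fun i _ => mul_self_nonneg _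
  have h1αq : (0:ℝ) < 1 + α * q := by positivity
  have h1αp : (0:ℝ) < 1 + α * p := by positivity
  -- key identity : 1 = M⁻¹ + α • (M⁻¹ * F)
  have hinv1 : M⁻¹ + α • (M⁻¹ * F) = 1 := by
    calc M⁻¹ + α • (M⁻¹ * F) = M⁻¹ * (1 + α • F) := by
          rw [Matrix.mul_add, Matrix.mul_one, Matrix.mul_smul]
      _ = 1 := hMM'
  set r : ℝ := v ⬝ᵥ (M⁻¹ * F) *ᵥ v with hrdef
  set s : ℝ := v ⬝ᵥ (M⁻¹ * (F * F)) *ᵥ v with hsdef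
  set Q : ℝ := v ⬝ᵥ F *ᵥ v with hQdef
  have hMinvH : M⁻¹ᴴ = M⁻¹ := hMinv.1
  have hF2 : (F * F).PosSemidef := by simpa [pow_two] using hF.pow 2
  have hF3 : (F * F * F).PosSemidef := by
    have := hF.pow 3
    simpa [pow_succ, pow_two, Matrix.mul_assoc] using this
  have hcong : ∀ A : Matrix n n ℝ, (A * M).PosSemidef → (M⁻¹ * A).PosSemidef := by
    intro A hA
    have h := hA.conjTranspose_mul_mul_same M⁻¹
    have : M⁻¹ᴴ * (A * M) * M⁻¹ = M⁻¹ * A := by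
      rw [hMinvH, Matrix.mul_assoc, Matrix.mul_assoc, hMM, Matrix.mul_one]
    rwa [this] at h
  have hFM : (F * M).PosSemidef := by
    have : F * M = F + α • (F * F) := by
      rw [hM, Matrix.mul_add, Matrix.mul_one, Matrix.mul_smul]
    rw [this]; exact hF.add (psd_smul hF2 hα.le)
  have hFFM : (F * F * M).PosSemidef := by
    have : F * F * M = F * F + α • (F * F * F) := by
      rw [hM, Matrix.mul_add, Matrix.mul_one, Matrix.mul_smul]
    rw [this]; exact hF2.add (psd_smul hF3 hα.le)
  have hr0 : 0 ≤ r := by simpa using (hcong F hFM).dotProduct_mulVec_nonneg v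
  have hs0 : 0 ≤ s := by
    have := (hcong (F * F) (by rwa [Matrix.mul_assoc] at hFFM ⊢)).dotProduct_mulVec_nonneg v
    simpa [Matrix.mul_assoc] using this
  have hpq : p = q + α * r := by
    have h := congrArg (fun A : Matrix n n ℝ => v ⬝ᵥ A *ᵥ v) hinv1
    simpa [add_mulVec, dotProduct_add, smul_mulVec, dotProduct_smul, one_mulVec,
      hq, hrdef, hp] using h.symm
  have hQr : Q = r + α * s := by
    have h2 : M⁻¹ * F + α • (M⁻¹ * (F * F)) = F := by
      calc M⁻¹ * F + α • (M⁻¹ * (F * F)) = (M⁻¹ + α • (M⁻¹ * F)) * F := by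
            rw [Matrix.add_mul, Matrix.smul_mul, Matrix.mul_assoc]
        _ = F := by rw [hinv1, Matrix.one_mul]
    have h := congrArg (fun A : Matrix n n ℝ => v ⬝ᵥ A *ᵥ v) h2
    simpa [add_mulVec, dotProduct_add, smul_mulVec, dotProduct_smul,
      hrdef, hsdef, hQdef] using h.symm
  -- now the log estimate
  have hqp : q ≤ p := by nlinarith
  have habs : |Real.log (1 + α * q) - Real.log (1 + α * p)|
      = Real.log (1 + α * p) - Real.log (1 + α * q) := by
    rw [abs_sub_comm, abs_of_nonneg]
    have := Real.log_le_log h1αq (by nlinarith : 1 + α * q ≤ 1 + α * p)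
    linarith
  have hlog : Real.log (1 + α * p) - Real.log (1 + α * q) ≤ α * (p - q) := by
    rw [← Real.log_div (ne_of_gt h1αp) (ne_of_gt h1αq)]
    have h3 := Real.log_le_sub_one_of_pos (div_pos h1αp h1αq)
    have h4 : (1 + α * p) / (1 + α * q) - 1 = (α * p - α * q) / (1 + α * q) := by
      field_simp
      ring
    have h5 : (α * p - α * q) / (1 + α * q) ≤ α * p - α * q := by
      apply div_le_self (by nlinarith) (by nlinarith)
    calc Real.log ((1 + α * p) / (1 + α * q)) ≤ (1 + α * p) / (1 + α * q) - 1 := h3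
      _ = (α * p - α * q) / (1 + α * q) := h4
      _ ≤ α * p - α * q := h5
      _ = α * (p - q) := by ring
  rw [hdetform, Real.log_mul (ne_of_gt hdet) (ne_of_gt h1αq)]
  have hgoal : Real.log M.det + Real.log (1 + α * q) - Real.log M.det
      - Real.log (1 + α * p) = Real.log (1 + α * q) - Real.log (1 + α * p) := by ring
  rw [hgoal, habs]
  calc Real.log (1 + α * p) - Real.log (1 + α * q) ≤ α * (p - q) := hlog
    _ = α ^ 2 * r := by rw [hpq]; ring
    _ ≤ α ^ 2 * Q := by
        apply mul_le_mul_of_nonneg_left _ (sq_nonneg α)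
        nlinarith [mul_nonneg hα.le hs0]


lemma psd_vecMulVec' {n : Type*} [Fintype n] (v : n → ℝ) : (vecMulVec v v).PosSemidef := by
  refine PosSemidef.of_dotProduct_mulVec_nonneg ?_ fun x => ?_
  · ext i j; simp [vecMulVec_apply, conjTranspose_apply, mul_comm]
  · have h : vecMulVec v v *ᵥ x = (v ⬝ᵥ x) • v := by
      ext i
      simp only [vecMulVec_apply, mulVec, dotProduct, Pi.smul_apply, smul_eq_mul,
        Finset.sum_mul, Finset.mul_sum]
      exact Finset.sum_congr rfl fun j _ => by ring
    rw [h]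
    simp only [dotProduct_smul, smul_eq_mul, star_trivial]
    rw [dotProduct_comm x v]
    exact mul_self_nonneg _

lemma psd_fisher {ι : Type*} [DecidableEq ι] {d : ℕ} (g : ι → (Fin d → ℝ)) (S : Finset ι) :
    (∑ y ∈ S, vecMulVec (g y) (g y)).PosSemidef := by
  classical
  induction S using Finset.induction with
  | empty => simpa using (Matrix.PosSemidef.zero (n := Fin d) (R := ℝ))
  | insert a s h ih => rw [Finset.sum_insert h]; exact (psd_vecMulVec' _).add ih

lemma quad_fisher {ι : Type*} [DecidableEq ι] {d : ℕ} (g : ι → (Fin d → ℝ)) (S : Finset ι)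
    (v : Fin d → ℝ) :
    v ⬝ᵥ (∑ y ∈ S, vecMulVec (g y) (g y)) *ᵥ v = ∑ y ∈ S, (v ⬝ᵥ g y) ^ 2 := by
  have hsum : (∑ y ∈ S, vecMulVec (g y) (g y)) *ᵥ v = ∑ y ∈ S, vecMulVec (g y) (g y) *ᵥ v := by
    ext i
    simp only [mulVec, dotProduct, Matrix.sum_apply, Finset.sum_apply, Finset.sum_mul]
    rw [Finset.sum_comm]
  have hdp : v ⬝ᵥ (∑ y ∈ S, vecMulVec (g y) (g y) *ᵥ v) = ∑ y ∈ S, v ⬝ᵥ (vecMulVec (g y) (g y) *ᵥ v) := by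
    simp only [dotProduct, Finset.sum_apply, Finset.mul_sum]
    rw [Finset.sum_comm]
  rw [hsum, hdp]
  refine Finset.sum_congr rfl fun y _ => ?_
  have h : vecMulVec (g y) (g y) *ᵥ v = (g y ⬝ᵥ v) • g y := by
    ext i
    simp only [vecMulVec_apply, mulVec, dotProduct, Pi.smul_apply, smul_eq_mul,
      Finset.sum_mul, Finset.mul_sum]
    exact Finset.sum_congr rfl fun j _ => by ring
  rw [h, dotProduct_smul, smul_eq_mul, dotProduct_comm (g y) v, pow_two]

lemma fisher_eps_step {ι : Type*} [DecidableEq ι] {d : ℕ}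
    (g : ι → (Fin d → ℝ)) {α : ℝ} (hα : 0 < α) (x : ι) (S : Finset ι) (hx : x ∉ S) :
    |fisherEps g α x S| ≤ α ^ 2 * ∑ y ∈ S, (g x ⬝ᵥ g y) ^ 2 := by
  have hins : fisherMatrix g (insert x S) = fisherMatrix g S + vecMulVec (g x) (g x) := by
    unfold fisherMatrix
    rw [Finset.sum_insert hx, add_comm]
  have hkey := key_step (psd_fisher g S) hα (g x)
  rw [quad_fisher] at hkey
  unfold fisherEps fisherDelta fisherUtility fisherBase
  rw [hins]
  unfold fisherMatrix
  exact hkey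


/-- Cumulative perturbation bound along a greedy chain:
`∑_{t=1}^k |ε_{x_t}(S_{t−1})| ≤ C · k · α² · max_{|S| ≤ k} max_x ∑_{y∈S} (gₓᵀ g_y)²`. -/
theorem fisher_cumulative_eps_bound
    {ι : Type*} [Fintype ι] [DecidableEq ι] [Nonempty ι] {d : ℕ} (hd : 1 ≤ d)
    (g : ι → (Fin d → ℝ)) (α : ℝ) (hα : 0 < α)
    (Gmax ρ : ℝ) (hG : 0 < Gmax) (hρ0 : 0 < ρ) (hρ1 : ρ < 1)
    (hGbound : ∀ x : ι, Real.sqrt (g x ⬝ᵥ g x) ≤ Gmax)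
    (k : ℕ)
    (hFS : ∀ S : Finset ι, S.card ≤ k → α * matOpNorm (fisherMatrix g S) ≤ ρ)
    (hden : 0 < 1 - ρ - α * Gmax ^ 2 * ρ)
    (S : ℕ → Finset ι) (x : ℕ → ι)
    (hS0 : S 0 = ∅)
    (hchain : ∀ t < k, x (t + 1) ∉ S t ∧ S (t + 1) = insert (x (t + 1)) (S t)) :
    ∑ t ∈ Finset.range k, |fisherEps g α (x (t + 1)) (S t)| ≤
      (1 / (1 - ρ - α * Gmax ^ 2 * ρ)) * k * α ^ 2 *
        (⨆ S' : {S' : Finset ι // S'.card ≤ k}, ⨆ z : ι,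
          ∑ y ∈ S'.1, (g z ⬝ᵥ g y) ^ 2) := by
  classical
  -- value of the double supremum
  set V : ℝ := ⨆ S' : {S' : Finset ι // S'.card ≤ k}, ⨆ z : ι,
      ∑ y ∈ S'.1, (g z ⬝ᵥ g y) ^ 2 with hV
  have hbdd : ∀ (f : ι → ℝ), BddAbove (Set.range f) :=
    fun f => Set.Finite.bddAbove (Set.finite_range f)
  have hbdd2 : BddAbove (Set.range fun S' : {S' : Finset ι // S'.card ≤ k} =>
      ⨆ z : ι, ∑ y ∈ S'.1, (g z ⬝ᵥ g y) ^ 2) :=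
    Set.Finite.bddAbove (Set.finite_range _)
  have hVle : ∀ (S' : Finset ι), S'.card ≤ k → ∀ z : ι,
      ∑ y ∈ S', (g z ⬝ᵥ g y) ^ 2 ≤ V := by
    intro S' hS' z
    have h1 : ∑ y ∈ S', (g z ⬝ᵥ g y) ^ 2 ≤ ⨆ w : ι, ∑ y ∈ S', (g w ⬝ᵥ g y) ^ 2 :=
      le_ciSup (f := fun w : ι => ∑ y ∈ S', (g w ⬝ᵥ g y) ^ 2) (hbdd _) z
    have h2 : (⨆ w : ι, ∑ y ∈ (⟨S', hS'⟩ : {S' : Finset ι // S'.card ≤ k}).1,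
        (g w ⬝ᵥ g y) ^ 2) ≤ V := le_ciSup hbdd2 ⟨S', hS'⟩
    exact le_trans h1 h2
  have hV0 : 0 ≤ V := by
    have := hVle ∅ (by simp) (Classical.arbitrary ι)
    simpa using this
  -- cardinalities along the chain
  have hcard : ∀ t, t ≤ k → (S t).card = t := by
    intro t
    induction t with
    | zero => intro _; simp [hS0]
    | succ t ih =>
      intro ht
      have htk : t < k := by omega
      obtain ⟨hx, hSt⟩ := hchain t htk
      rw [hSt, Finset.card_insert_of_notMem hx, ih (by omega)]
  -- per-step bound
  have hstep : ∀ t < k, |fisherEps g α (x (t + 1)) (S t)| ≤ α ^ 2 * V := by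
    intro t ht
    obtain ⟨hx, _⟩ := hchain t ht
    refine le_trans (fisher_eps_step g hα _ _ hx) ?_
    have := hVle (S t) (by rw [hcard t (le_of_lt ht)]; omega) (x (t + 1))
    nlinarith [sq_nonneg α]
  -- sum up
  have hsum : ∑ t ∈ Finset.range k, |fisherEps g α (x (t + 1)) (S t)| ≤ k * (α ^ 2 * V) := by
    calc ∑ t ∈ Finset.range k, |fisherEps g α (x (t + 1)) (S t)|
        ≤ ∑ _t ∈ Finset.range k, α ^ 2 * V :=
          Finset.sum_le_sum fun t ht => hstep t (Finset.mem_range.mp ht)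
      _ = k * (α ^ 2 * V) := by rw [Finset.sum_const, Finset.card_range, nsmul_eq_mul]
  have hC : 1 ≤ 1 / (1 - ρ - α * Gmax ^ 2 * ρ) := by
    rw [le_div_iff₀ hden]
    nlinarith [sq_nonneg Gmax, mul_pos hα (mul_pos (mul_pos hG hG) hρ0)]
  calc ∑ t ∈ Finset.range k, |fisherEps g α (x (t + 1)) (S t)|
      ≤ k * (α ^ 2 * V) := hsum
    _ = 1 * ((k : ℝ) * α ^ 2 * V) := by ring
    _ ≤ (1 / (1 - ρ - α * Gmax ^ 2 * ρ)) * ((k : ℝ) * α ^ 2 * V) := by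
        apply mul_le_mul_of_nonneg_right hC
        positivity
    _ = (1 / (1 - ρ - α * Gmax ^ 2 * ρ)) * k * α ^ 2 * V := by ring
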